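/- arXiv:math/0306407 — 2 statements merged into one kernel-verified Lean document; each statement's English description precedes it below -/
import Mathlib

section
/- Additionally let W ≤ W' ≤ G with W of index 2 in W', and fix τ ∈ W' \ W (so τ lies in the normalizer of W). Suppose a W'-orbit in G/H is the union of exactly two distinct W-orbits a and a₁ (a chiral pair). If a is a (χ,θ)-orbit and a₁ is not a (χ,θ)-orbit, then a₁ is a (τχ,θ)-orbit and a is not a (τχ,θ)-orbit. (In the chemical interpretation: the members of a chiral pair are indistinguishable via pairs of characters.) -/
/-- The conjugate character `τχ : W → ℂˣ`, `(τχ)(σ) = χ(τ⁻¹στ)`, of a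
one-dimensional character `χ` of `W` by an element `τ` of the normalizer of `W`. -/
def conjChar {G : Type*} [Group G] {W : Subgroup G} (τ : G) (hτ : τ ∈ Subgroup.normalizer (W : Set G))
    (χ : W →* ℂˣ) : W →* ℂˣ where
  toFun σ := χ ⟨τ⁻¹ * (σ : G) * τ, by
    have h := (Subgroup.mem_normalizer_iff.mp (Subgroup.inv_mem _ hτ) (σ : G)).mp σ.2
    simpa using h⟩
  map_one' := by
    rw [← χ.map_one]
    apply congrArg
    ext
    simp
  map_mul' σ τ' := by
    show χ _ = χ _ * χ _
    rw [← χ.map_mul]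
    apply congrArg
    ext
    push_cast
    group

/-- A `W`-orbit `a` in `G/H` is a `(χ,θ)`-orbit if for every `υ ∈ G` with
`υH ∈ a` and every `σ ∈ W` with `υ⁻¹συ ∈ H` one has `χ(σ)·θ(υ⁻¹συ) = 1`. -/
def IsChiThetaOrbit {G : Type*} [Group G] {H W : Subgroup G}
    (χ : W →* ℂˣ) (θ : H →* ℂˣ)
    (a : Quotient (MulAction.orbitRel W (G ⧸ H))) : Prop :=
  ∀ υ : G, Quotient.mk (MulAction.orbitRel W (G ⧸ H)) (υ : G ⧸ H) = a →
    ∀ (σ : W) (hσ : υ⁻¹ * (σ : G) * υ ∈ H),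
      χ σ * θ ⟨υ⁻¹ * (σ : G) * υ, hσ⟩ = 1

/-- Let `W ≤ W'` with `W` of index 2 in `W'` and `τ ∈ W' \ W`
(so `τ` normalizes `W`).  Suppose a `W'`-orbit in `G/H` is the union of exactly
two distinct `W`-orbits `a` and `a₁` (a chiral pair).  If `a` is a `(χ,θ)`-orbit
and `a₁` is not, then `a₁` is a `(τχ,θ)`-orbit and `a` is not: the members of a
chiral pair are indistinguishable via pairs of characters. -/
theorem lunn_senior_stmt16 {G : Type*} [Group G] (H W W' : Subgroup G)
    (hWW' : W ≤ W') (hidx : (W.subgroupOf W').index = 2)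
    (τ : G) (hτW' : τ ∈ W') (hτW : τ ∉ W) (hτn : τ ∈ Subgroup.normalizer (W : Set G))
    (χ : W →* ℂˣ) (θ : H →* ℂˣ)
    (A B : G ⧸ H)
    (a a₁ : Quotient (MulAction.orbitRel W (G ⧸ H)))
    (ha : Quotient.mk (MulAction.orbitRel W (G ⧸ H)) A = a)
    (ha₁ : Quotient.mk (MulAction.orbitRel W (G ⧸ H)) B = a₁)
    (hne : a ≠ a₁)
    (hsame : B ∈ MulAction.orbit W' A)
    (honlytwo : ∀ C ∈ MulAction.orbit W' A,
      Quotient.mk (MulAction.orbitRel W (G ⧸ H)) C = a ∨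
      Quotient.mk (MulAction.orbitRel W (G ⧸ H)) C = a₁)
    (haOrb : IsChiThetaOrbit χ θ a) (ha₁Orb : ¬ IsChiThetaOrbit χ θ a₁) :
    IsChiThetaOrbit (conjChar τ hτn χ) θ a₁ ∧
      ¬ IsChiThetaOrbit (conjChar τ hτn χ) θ a := by
  have hτ2 : τ * τ ∈ W := by
    have h := Subgroup.mul_self_mem_of_index_two hidx (⟨τ, hτW'⟩ : W')
    simpa [Subgroup.mem_subgroupOf] using h
  have hτWsub : (⟨τ, hτW'⟩ : W') ∉ W.subgroupOf W' := by
    simpa [Subgroup.mem_subgroupOf] using hτW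
  obtain ⟨w', hw'0⟩ := hsame
  have hw' : (w' : W') • A = B := hw'0
  have hw'G : (w' : G) • A = B := hw'0
  have horb : ∀ x : G ⧸ H, Quotient.mk (MulAction.orbitRel W (G ⧸ H)) x = a₁ →
      x ∈ MulAction.orbit W' A := by
    intro x hx
    rw [← ha₁, Quotient.eq] at hx
    obtain ⟨w, hw0⟩ := hx
    have hw : (w : W) • B = x := hw0
    refine ⟨⟨(w : G), hWW' w.2⟩ * w', ?_⟩
    show ((⟨(w : G), hWW' w.2⟩ : W') * w') • A = x
    rw [mul_smul]
    show (⟨(w : G), hWW' w.2⟩ : W') • ((w' : W') • A) = x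
    rw [hw']
    exact hw
  -- key lemma: τ⁻¹ maps the orbit a₁ into the orbit a
  have key : ∀ x : G ⧸ H, Quotient.mk (MulAction.orbitRel W (G ⧸ H)) x = a₁ →
      Quotient.mk (MulAction.orbitRel W (G ⧸ H)) (τ⁻¹ • x) = a := by
    intro x hx
    have hxB : x ∈ MulAction.orbit W B := by
      rw [← ha₁, Quotient.eq] at hx; exact hx
    obtain ⟨w, hw0⟩ := hxB
    have hw : (w : W) • B = x := hw0
    have hxA : x ∈ MulAction.orbit W' A := horb x (by rw [← ha₁, Quotient.eq]; exact ⟨w, hw⟩)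
    have hτx : τ⁻¹ • x ∈ MulAction.orbit W' A := by
      obtain ⟨v, hv0⟩ := hxA
      have hv : (v : W') • A = x := hv0
      refine ⟨⟨τ⁻¹, W'.inv_mem hτW'⟩ * v, ?_⟩
      show ((⟨τ⁻¹, W'.inv_mem hτW'⟩ : W') * v) • A = τ⁻¹ • x
      rw [mul_smul]
      show (⟨τ⁻¹, W'.inv_mem hτW'⟩ : W') • ((v : W') • A) = τ⁻¹ • x
      rw [hv]
      rfl
    rcases honlytwo _ hτx with h | h
    · exact h
    · exfalso
      rw [← hx, Quotient.eq] at h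
      obtain ⟨σ, hσ⟩ := h
      have hσG : (σ : G) • x = τ⁻¹ • x := hσ
      have hwG : (w : G) • B = x := hw
      by_cases hw'W : (w' : G) ∈ W
      · refine hne ?_
        rw [← ha, ← ha₁, Quotient.eq]
        refine ⟨(⟨(w' : G), hw'W⟩ : W)⁻¹, ?_⟩
        show ((w' : G))⁻¹ • B = A
        rw [← hw'G, inv_smul_smul]
      · have h2 : (⟨τ, hτW'⟩ : W')⁻¹ * w'⁻¹ ∈ W.subgroupOf W' := by
          rw [Subgroup.mul_mem_iff_of_index_two hidx]
          exact iff_of_false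
            (fun hc => hτWsub ((W.subgroupOf W').inv_mem_iff.mp hc))
            (fun hc => hw'W (by
              have := (W.subgroupOf W').inv_mem_iff.mp hc
              simpa [Subgroup.mem_subgroupOf] using this))
        have hu : τ⁻¹ * (w' : G)⁻¹ ∈ W := by
          simpa [Subgroup.mem_subgroupOf] using h2
        have hv : τ⁻¹ * (w' : G)⁻¹ * (w : G)⁻¹ ∈ W := W.mul_mem hu (W.inv_mem w.2)
        have hconj : τ * (τ⁻¹ * (w' : G)⁻¹ * (w : G)⁻¹) * τ⁻¹ ∈ W :=
          (Subgroup.mem_normalizer_iff.mp hτn _).mp hv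
        have hmem : τ * (τ⁻¹ * (w' : G)⁻¹ * (w : G)⁻¹) * τ * (σ : G) ∈ W := by
          have h3 := W.mul_mem (W.mul_mem hconj hτ2) σ.2
          rw [show τ * (τ⁻¹ * (w' : G)⁻¹ * (w : G)⁻¹) * τ⁻¹ * (τ * τ) * (σ : G)
              = τ * (τ⁻¹ * (w' : G)⁻¹ * (w : G)⁻¹) * τ * (σ : G) by group] at h3
          exact h3
        have heq : (τ * (τ⁻¹ * (w' : G)⁻¹ * (w : G)⁻¹) * τ * (σ : G)) • x = A := by
          have hwB : ((w : G))⁻¹ • x = B := by rw [← hwG, inv_smul_smul]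
          rw [mul_smul, hσG, smul_smul,
            show τ * (τ⁻¹ * (w' : G)⁻¹ * (w : G)⁻¹) * τ * τ⁻¹
              = (w' : G)⁻¹ * (w : G)⁻¹ by group,
            mul_smul, hwB, ← hw'G, inv_smul_smul]
        exact hne (by rw [← ha, ← hx, Quotient.eq]; exact ⟨⟨_, hmem⟩, heq⟩)
  -- key2 : τ maps the orbit a₁ into the orbit a
  have key2 : ∀ x : G ⧸ H, Quotient.mk (MulAction.orbitRel W (G ⧸ H)) x = a₁ →
      Quotient.mk (MulAction.orbitRel W (G ⧸ H)) (τ • x) = a := by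
    intro x hx
    have hτx : τ • x ∈ MulAction.orbit W' A := by
      obtain ⟨v, hv0⟩ := horb x hx
      have hv : (v : W') • A = x := hv0
      refine ⟨⟨τ, hτW'⟩ * v, ?_⟩
      show ((⟨τ, hτW'⟩ : W') * v) • A = τ • x
      rw [mul_smul]
      show (⟨τ, hτW'⟩ : W') • ((v : W') • A) = τ • x
      rw [hv]
      rfl
    rcases honlytwo _ hτx with h | h
    · exact h
    · exfalso
      have h2 := key _ h
      rw [inv_smul_smul, hx] at h2
      exact hne (h2 ▸ rfl)
  have hτinv : τ⁻¹ ∈ Subgroup.normalizer (W : Set G) := (Subgroup.normalizer (W : Set G)).inv_mem hτn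
  constructor
  · -- a₁ is a (τχ, θ)-orbit
    intro υ hυ σ hσ
    have hυ' : Quotient.mk (MulAction.orbitRel W (G ⧸ H)) (((τ⁻¹ * υ : G) : G ⧸ H)) = a := by
      have h := key _ hυ
      rwa [show τ⁻¹ • ((υ : G) : G ⧸ H) = ((τ⁻¹ * υ : G) : G ⧸ H) from
        MulAction.Quotient.smul_mk H _ _] at h
    have hσ'W : τ⁻¹ * (σ : G) * τ ∈ W := by
      have h := (Subgroup.mem_normalizer_iff.mp hτinv (σ : G)).mp σ.2
      simpa using h
    set σ' : W := ⟨τ⁻¹ * (σ : G) * τ, hσ'W⟩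
    have hσ'H : (τ⁻¹ * υ)⁻¹ * (σ' : G) * (τ⁻¹ * υ) ∈ H := by
      rw [show (τ⁻¹ * υ)⁻¹ * (σ' : G) * (τ⁻¹ * υ)
        = υ⁻¹ * (σ : G) * υ by show _ * (τ⁻¹ * (σ:G) * τ) * _ = _; group]
      exact hσ
    have h := haOrb (τ⁻¹ * υ) hυ' σ' hσ'H
    have hχ : conjChar τ hτn χ σ = χ σ' := rfl
    have hθ : (⟨υ⁻¹ * (σ : G) * υ, hσ⟩ : H)
        = ⟨(τ⁻¹ * υ)⁻¹ * (σ' : G) * (τ⁻¹ * υ), hσ'H⟩ := by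
      ext
      show υ⁻¹ * (σ : G) * υ = (τ⁻¹ * υ)⁻¹ * (τ⁻¹ * (σ : G) * τ) * (τ⁻¹ * υ)
      group
    rw [hχ, hθ]
    exact h
  · -- a is not a (τχ, θ)-orbit
    intro hcon
    apply ha₁Orb
    intro υ hυ σ hσ
    have hυ' : Quotient.mk (MulAction.orbitRel W (G ⧸ H)) (((τ * υ : G) : G ⧸ H)) = a := by
      have h := key2 _ hυ
      rwa [show τ • ((υ : G) : G ⧸ H) = ((τ * υ : G) : G ⧸ H) from
        MulAction.Quotient.smul_mk H _ _] at h
    have hσ'W : τ * (σ : G) * τ⁻¹ ∈ W :=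
      (Subgroup.mem_normalizer_iff.mp hτn (σ : G)).mp σ.2
    set σ' : W := ⟨τ * (σ : G) * τ⁻¹, hσ'W⟩
    have hσ'H : (τ * υ)⁻¹ * (σ' : G) * (τ * υ) ∈ H := by
      rw [show (τ * υ)⁻¹ * (σ' : G) * (τ * υ)
        = υ⁻¹ * (σ : G) * υ by show _ * (τ * (σ:G) * τ⁻¹) * _ = _; group]
      exact hσ
    have h := hcon (τ * υ) hυ' σ' hσ'H
    have hχ : conjChar τ hτn χ σ' = χ σ := by
      show χ _ = χ σ
      apply congrArg
      ext
      show τ⁻¹ * (τ * (σ : G) * τ⁻¹) * τ = (σ : G)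
      group
    have hθ : (⟨υ⁻¹ * (σ : G) * υ, hσ⟩ : H)
        = ⟨(τ * υ)⁻¹ * (σ' : G) * (τ * υ), hσ'H⟩ := by
      ext
      show υ⁻¹ * (σ : G) * υ = (τ * υ)⁻¹ * (τ * (σ : G) * τ⁻¹) * (τ * υ)
      group
    rw [hθ, ← hχ]
    exact h
end

section
/- The subgroup of level-preserving order automorphisms α of the poset Q that map every chiral pair onto a chiral pair (that is, for each C ∈ 𝒞, the image α(C) again belongs to 𝒞) is isomorphic to the direct product S₂ × S₂, generated by the automorphism that simultaneously swaps a₄₂ ↔ b₄₂, a₃₂ ↔ b₃₂, a₄₁₁ ↔ b₄₁₁ (fixing all other elements) and the automorphism that swaps e₄₁₁ ↔ f₄₁₁ (fixing all other elements). -/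
/-- The 15 substitution isomers of cyclopropane with empirical formulae in
`D = {(6),(5,1),(4,2),(4,1²),(3²)}` (the poset `T₍D;G₎`, `G ≤ S₆` dihedral of
order 6). -/
inductive CycQ : Type
  | a6 | a51 | a42 | b42 | c42 | e42 | a32 | b32 | c32 | e32
  | a411 | b411 | c411 | e411 | f411
  deriving DecidableEq

open CycQ in
instance : Fintype CycQ :=
  Fintype.ofList [a6, a51, a42, b42, c42, e42, a32, b32, c32, e32,
    a411, b411, c411, e411, f411] (fun x => by cases x <;> decide)

open CycQ in
/-- The level function, encoding the levels `(6), (5,1), (4,2), (3²), (4,1²)`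
by `5, 4, 3, 2, 1` respectively. -/
def cycLevel : CycQ → ℕ
  | a6 => 5
  | a51 => 4
  | a42 | b42 | c42 | e42 => 3
  | a32 | b32 | c32 | e32 => 2
  | a411 | b411 | c411 | e411 | f411 => 1

open CycQ in
/-- The covering relations of the cyclopropane poset. -/
def cycCovers : List (CycQ × CycQ) :=
  [(a51, a6),
   (a42, a51), (b42, a51), (c42, a51), (e42, a51),
   (b32, a42), (c32, a42),
   (a32, b42), (c32, b42),
   (a32, c42), (b32, c42),
   (a32, e42), (b32, e42), (c32, e42), (e32, e42),
   (a411, a42), (b411, b42), (c411, c42), (e411, e42), (f411, e42)]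

/-- The partial order of the cyclopropane poset: the reflexive-transitive closure
of the covering relations. -/
def cycLE : CycQ → CycQ → Prop :=
  Relation.ReflTransGen (fun x y => (x, y) ∈ cycCovers)

/-- The group of level-preserving order automorphisms of the cyclopropane poset. -/
def cycAut : Subgroup (Equiv.Perm CycQ) where
  carrier := {α | (∀ x, cycLevel (α x) = cycLevel x) ∧
    ∀ x y, cycLE (α x) (α y) ↔ cycLE x y}
  one_mem' := by
    constructor <;> simp
  mul_mem' := by
    rintro α β ⟨hα1, hα2⟩ ⟨hβ1, hβ2⟩
    constructor
    · intro x
      simp only [Equiv.Perm.mul_apply]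
      rw [hα1, hβ1]
    · intro x y
      simp only [Equiv.Perm.mul_apply]
      rw [hα2, hβ2]
  inv_mem' := by
    rintro α ⟨hα1, hα2⟩
    constructor
    · intro x
      conv_rhs => rw [← (show α (α⁻¹ x) = x from Equiv.apply_symm_apply α x)]
      rw [hα1]
    · intro x y
      conv_rhs => rw [← (show α (α⁻¹ x) = x from Equiv.apply_symm_apply α x),
        ← (show α (α⁻¹ y) = y from Equiv.apply_symm_apply α y)]
      rw [hα2]

/-- The set of chiral pairs of the cyclopropane poset:
`𝒞 = {{a₄₂,b₄₂}, {a₃₂,b₃₂}, {a₄₁₁,b₄₁₁}, {e₄₁₁,f₄₁₁}}`. -/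
def chiralPairs : Set (Set CycQ) :=
  {{CycQ.a42, CycQ.b42}, {CycQ.a32, CycQ.b32},
   {CycQ.a411, CycQ.b411}, {CycQ.e411, CycQ.f411}}

/-- The subgroup of level-preserving order automorphisms of the cyclopropane
poset that map every chiral pair onto a chiral pair. -/
def cycChiralAut : Subgroup (Equiv.Perm CycQ) where
  carrier := {α | α ∈ cycAut ∧ ∀ C ∈ chiralPairs, (⇑α) '' C ∈ chiralPairs}
  one_mem' := by
    refine ⟨cycAut.one_mem, ?_⟩
    intro C hC
    simpa using hC
  mul_mem' := by
    rintro α β ⟨hα, hαC⟩ ⟨hβ, hβC⟩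
    refine ⟨cycAut.mul_mem hα hβ, ?_⟩
    intro C hC
    have : (⇑(α * β)) '' C = (⇑α) '' ((⇑β) '' C) := by
      rw [← Set.image_comp]
      rfl
    rw [this]
    exact hαC _ (hβC _ hC)
  inv_mem' := by
    rintro α ⟨hα, hαC⟩
    refine ⟨cycAut.inv_mem hα, ?_⟩
    haveI : Finite ↥chiralPairs := (Set.toFinite chiralPairs).to_subtype
    set g : ↥chiralPairs → ↥chiralPairs := fun C => ⟨(⇑α) '' C.1, hαC C.1 C.2⟩ with hg
    have hginj : Function.Injective g := by
      intro C D h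
      have h' : (⇑α) '' C.1 = (⇑α) '' D.1 := congrArg Subtype.val h
      exact Subtype.ext (Set.image_injective.mpr α.injective h')
    have hgsurj : Function.Surjective g := Finite.surjective_of_injective hginj
    intro C hC
    obtain ⟨⟨D, hD⟩, hDeq⟩ := hgsurj ⟨C, hC⟩
    have h1 : (⇑α) '' D = C := congrArg Subtype.val hDeq
    have h2 : (⇑α⁻¹) '' C = D := by
      rw [← h1, ← Set.image_comp]
      have : (⇑α⁻¹) ∘ (⇑α) = id := by
        funext x
        simp
      rw [this, Set.image_id]
    rw [h2]
    exact hD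

/-- The pair `{a₄₂, b₄₂}`. -/
def cycAB42 : Fin 2 → CycQ := ![CycQ.a42, CycQ.b42]

/-- The pair `{a₃₂, b₃₂}`. -/
def cycAB32 : Fin 2 → CycQ := ![CycQ.a32, CycQ.b32]

/-- The pair `{a₄₁₁, b₄₁₁}`. -/
def cycAB411 : Fin 2 → CycQ := ![CycQ.a411, CycQ.b411]

/-- The pair `{e₄₁₁, f₄₁₁}`. -/
def cycEF : Fin 2 → CycQ := ![CycQ.e411, CycQ.f411]


open CycQ

lemma cyc_key : ∀ π : Equiv.Perm (Fin 2), π = 1 ∨ π = Equiv.swap 0 1 := by decide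

/-- swap a42↔b42, a32↔b32, a411↔b411 -/
def cg1 : Equiv.Perm CycQ := (Equiv.swap a42 b42) * (Equiv.swap a32 b32) * (Equiv.swap a411 b411)
/-- swap e411↔f411 -/
def cg2 : Equiv.Perm CycQ := Equiv.swap e411 f411

/-- up-sets of the poset -/
def cycUp : CycQ → List CycQ
  | a6 => [a6]
  | a51 => [a51, a6]
  | a42 => [a42, a51, a6]
  | b42 => [b42, a51, a6]
  | c42 => [c42, a51, a6]
  | e42 => [e42, a51, a6]
  | a32 => [a32, b42, c42, e42, a51, a6]
  | b32 => [b32, a42, c42, e42, a51, a6]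
  | c32 => [c32, a42, b42, e42, a51, a6]
  | e32 => [e32, e42, a51, a6]
  | a411 => [a411, a42, a51, a6]
  | b411 => [b411, b42, a51, a6]
  | c411 => [c411, c42, a51, a6]
  | e411 => [e411, e42, a51, a6]
  | f411 => [f411, e42, a51, a6]

set_option maxRecDepth 10000 in
lemma cycLE_mem_up : ∀ x y, cycLE x y → y ∈ cycUp x := by
  have closure : ∀ x : CycQ, ∀ p ∈ cycCovers, p.1 ∈ cycUp x → p.2 ∈ cycUp x := by decide
  intro x y h
  induction h with
  | refl => cases x <;> decide
  | tail _ h2 ih => exact closure x _ h2 ih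

lemma cover_le {x y : CycQ} (h : (x, y) ∈ cycCovers) : cycLE x y :=
  Relation.ReflTransGen.single h

lemma mem_of (g : Equiv.Perm CycQ)
    (hlev : ∀ x, cycLevel (g x) = cycLevel x)
    (hinv : ∀ x, g (g x) = x)
    (hcov : ∀ x y, (x, y) ∈ cycCovers → (g x, g y) ∈ cycCovers)
    (hchi : ∀ C ∈ chiralPairs, (⇑g) '' C ∈ chiralPairs) : g ∈ cycChiralAut := by
  have mono : ∀ x y, cycLE x y → cycLE (g x) (g y) := by
    intro x y h
    induction h with
    | refl => exact .refl
    | tail _ hstep ih => exact ih.tail (hcov _ _ hstep)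
  refine ⟨⟨hlev, fun x y => ⟨fun h => ?_, mono x y⟩⟩, hchi⟩
  have := mono _ _ h
  rwa [hinv, hinv] at this

lemma pair_mem_chiral {u v w z : CycQ} (h : ({u, v} : Set CycQ) = {w, z})
    (hm : ({w, z} : Set CycQ) ∈ chiralPairs) : ({u, v} : Set CycQ) ∈ chiralPairs := h ▸ hm

lemma chmem1 : ({a42, b42} : Set CycQ) ∈ chiralPairs := Set.mem_insert _ _
lemma chmem2 : ({a32, b32} : Set CycQ) ∈ chiralPairs :=
  Set.mem_insert_of_mem _ (Set.mem_insert _ _)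
lemma chmem3 : ({a411, b411} : Set CycQ) ∈ chiralPairs :=
  Set.mem_insert_of_mem _ (Set.mem_insert_of_mem _ (Set.mem_insert _ _))
lemma chmem4 : ({e411, f411} : Set CycQ) ∈ chiralPairs :=
  Set.mem_insert_of_mem _ (Set.mem_insert_of_mem _ (Set.mem_insert_of_mem _ rfl))

lemma cg1_mem : cg1 ∈ cycChiralAut := by
  refine mem_of cg1 (by decide) (by decide) (by decide) ?_
  intro C hC
  simp only [chiralPairs, Set.mem_insert_iff, Set.mem_singleton_iff] at hC
  rcases hC with rfl | rfl | rfl | rfl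
  · rw [Set.image_pair, (show cg1 a42 = b42 by decide), (show cg1 b42 = a42 by decide),
      Set.pair_comm]
    exact chmem1
  · rw [Set.image_pair, (show cg1 a32 = b32 by decide), (show cg1 b32 = a32 by decide),
      Set.pair_comm]
    exact chmem2
  · rw [Set.image_pair, (show cg1 a411 = b411 by decide), (show cg1 b411 = a411 by decide),
      Set.pair_comm]
    exact chmem3
  · rw [Set.image_pair, (show cg1 e411 = e411 by decide), (show cg1 f411 = f411 by decide)]
    exact chmem4

lemma cg2_mem : cg2 ∈ cycChiralAut := by
  refine mem_of cg2 (by decide) (by decide) (by decide) ?_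
  intro C hC
  simp only [chiralPairs, Set.mem_insert_iff, Set.mem_singleton_iff] at hC
  rcases hC with rfl | rfl | rfl | rfl
  · rw [Set.image_pair, (show cg2 a42 = a42 by decide), (show cg2 b42 = b42 by decide)]
    exact chmem1
  · rw [Set.image_pair, (show cg2 a32 = a32 by decide), (show cg2 b32 = b32 by decide)]
    exact chmem2
  · rw [Set.image_pair, (show cg2 a411 = a411 by decide), (show cg2 b411 = b411 by decide)]
    exact chmem3
  · rw [Set.image_pair, (show cg2 e411 = f411 by decide), (show cg2 f411 = e411 by decide),
      Set.pair_comm]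
    exact chmem4

def cfraw : Equiv.Perm (Fin 2) × Equiv.Perm (Fin 2) → Equiv.Perm CycQ :=
  fun p => (if p.1 = 1 then 1 else cg1) * (if p.2 = 1 then 1 else cg2)

lemma cfraw_mem : ∀ p, cfraw p ∈ cycChiralAut := by
  intro p
  have h1 : (if p.1 = 1 then 1 else cg1) ∈ cycChiralAut := by
    split
    · exact cycChiralAut.one_mem
    · exact cg1_mem
  have h2 : (if p.2 = 1 then 1 else cg2) ∈ cycChiralAut := by
    split
    · exact cycChiralAut.one_mem
    · exact cg2_mem
  exact cycChiralAut.mul_mem h1 h2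

lemma cfraw_mul : ∀ p q, cfraw (p * q) = cfraw p * cfraw q := by
  intro ⟨p1, p2⟩ ⟨q1, q2⟩
  rcases cyc_key p1 with rfl | rfl <;> rcases cyc_key p2 with rfl | rfl <;>
    rcases cyc_key q1 with rfl | rfl <;> rcases cyc_key q2 with rfl | rfl <;>
    simp only [cfraw, Prod.mk_mul_mk] <;> decide

def cf : Equiv.Perm (Fin 2) × Equiv.Perm (Fin 2) →* cycChiralAut :=
  MonoidHom.mk' (fun p => ⟨cfraw p, cfraw_mem p⟩) (fun p q => Subtype.ext (cfraw_mul p q))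

lemma cf_inj : Function.Injective cf := by
  intro ⟨p1, p2⟩ ⟨q1, q2⟩ h
  have h' : cfraw (p1, p2) = cfraw (q1, q2) := congrArg Subtype.val h
  rcases cyc_key p1 with rfl | rfl <;> rcases cyc_key p2 with rfl | rfl <;>
    rcases cyc_key q1 with rfl | rfl <;> rcases cyc_key q2 with rfl | rfl <;>
    first
      | rfl
      | exact absurd h' (by decide)

lemma lev1 : ∀ y : CycQ, cycLevel y = 1 →
    y = a411 ∨ y = b411 ∨ y = c411 ∨ y = e411 ∨ y = f411 := by decide
lemma lev2 : ∀ y : CycQ, cycLevel y = 2 → y = a32 ∨ y = b32 ∨ y = c32 ∨ y = e32 := by decide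
lemma lev3 : ∀ y : CycQ, cycLevel y = 3 → y = a42 ∨ y = b42 ∨ y = c42 ∨ y = e42 := by decide
lemma lev4 : ∀ y : CycQ, cycLevel y = 4 → y = a51 := by decide
lemma lev5 : ∀ y : CycQ, cycLevel y = 5 → y = a6 := by decide

lemma cf_surj : Function.Surjective cf := by
  rintro ⟨α, ⟨hlev, hord⟩, hchi⟩
  have hinj : Function.Injective α := α.injective
  have h6 : α a6 = a6 := lev5 _ (hlev a6)
  have h51 : α a51 = a51 := lev4 _ (hlev a51)
  have hmemC1 : ({α a42, α b42} : Set CycQ) = {a42, b42} := by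
    have hC1 : ({α a42, α b42} : Set CycQ) ∈ chiralPairs := by
      have := hchi {a42, b42} chmem1
      rwa [Set.image_pair] at this
    simp only [chiralPairs, Set.mem_insert_iff, Set.mem_singleton_iff] at hC1
    rcases hC1 with h | h | h | h
    · exact h
    all_goals (
      exfalso
      have hx : α a42 ∈ ({α a42, α b42} : Set CycQ) := Set.mem_insert _ _
      rw [h] at hx
      simp only [Set.mem_insert_iff, Set.mem_singleton_iff] at hx
      have hl := hlev a42
      rcases hx with h' | h' <;> rw [h'] at hl <;> exact absurd hl (by decide))
  have hmemC2 : ({α a32, α b32} : Set CycQ) = {a32, b32} := by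
    have hC2 : ({α a32, α b32} : Set CycQ) ∈ chiralPairs := by
      have := hchi {a32, b32} chmem2
      rwa [Set.image_pair] at this
    simp only [chiralPairs, Set.mem_insert_iff, Set.mem_singleton_iff] at hC2
    rcases hC2 with h | h | h | h
    · exfalso
      have hx : α a32 ∈ ({α a32, α b32} : Set CycQ) := Set.mem_insert _ _
      rw [h] at hx
      simp only [Set.mem_insert_iff, Set.mem_singleton_iff] at hx
      have hl := hlev a32
      rcases hx with h' | h' <;> rw [h'] at hl <;> exact absurd hl (by decide)
    · exact h
    all_goals (
      exfalso
      have hx : α a32 ∈ ({α a32, α b32} : Set CycQ) := Set.mem_insert _ _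
      rw [h] at hx
      simp only [Set.mem_insert_iff, Set.mem_singleton_iff] at hx
      have hl := hlev a32
      rcases hx with h' | h' <;> rw [h'] at hl <;> exact absurd hl (by decide))
  have ha42 : α a42 = a42 ∨ α a42 = b42 := by
    have hx : α a42 ∈ ({a42, b42} : Set CycQ) := hmemC1 ▸ Set.mem_insert _ _
    simpa using hx
  have hb42 : α b42 = a42 ∨ α b42 = b42 := by
    have hx : α b42 ∈ ({a42, b42} : Set CycQ) :=
      hmemC1 ▸ Set.mem_insert_of_mem _ rfl
    simpa using hx
  have hA42in : α a42 = a42 ∨ α b42 = a42 := by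
    have hx : a42 ∈ ({α a42, α b42} : Set CycQ) := hmemC1.symm ▸ Set.mem_insert _ _
    simp only [Set.mem_insert_iff, Set.mem_singleton_iff] at hx
    rcases hx with h | h
    · exact Or.inl h.symm
    · exact Or.inr h.symm
  have hB42in : α a42 = b42 ∨ α b42 = b42 := by
    have hx : b42 ∈ ({α a42, α b42} : Set CycQ) :=
      hmemC1.symm ▸ Set.mem_insert_of_mem _ rfl
    simp only [Set.mem_insert_iff, Set.mem_singleton_iff] at hx
    rcases hx with h | h
    · exact Or.inl h.symm
    · exact Or.inr h.symm
  have ha32 : α a32 = a32 ∨ α a32 = b32 := by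
    have hx : α a32 ∈ ({a32, b32} : Set CycQ) := hmemC2 ▸ Set.mem_insert _ _
    simpa using hx
  have hb32 : α b32 = a32 ∨ α b32 = b32 := by
    have hx : α b32 ∈ ({a32, b32} : Set CycQ) :=
      hmemC2 ▸ Set.mem_insert_of_mem _ rfl
    simpa using hx
  have hA32in : α a32 = a32 ∨ α b32 = a32 := by
    have hx : a32 ∈ ({α a32, α b32} : Set CycQ) := hmemC2.symm ▸ Set.mem_insert _ _
    simp only [Set.mem_insert_iff, Set.mem_singleton_iff] at hx
    rcases hx with h | h
    · exact Or.inl h.symm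
    · exact Or.inr h.symm
  have hB32in : α a32 = b32 ∨ α b32 = b32 := by
    have hx : b32 ∈ ({α a32, α b32} : Set CycQ) :=
      hmemC2.symm ▸ Set.mem_insert_of_mem _ rfl
    simp only [Set.mem_insert_iff, Set.mem_singleton_iff] at hx
    rcases hx with h | h
    · exact Or.inl h.symm
    · exact Or.inr h.symm
  have hc32 : α c32 = c32 := by
    rcases lev2 _ (hlev c32) with h | h | h | h
    · rcases hA32in with h' | h' <;> exact absurd (hinj (h.trans h'.symm)) (by decide)
    · rcases hB32in with h' | h' <;> exact absurd (hinj (h.trans h'.symm)) (by decide)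
    · exact h
    · have hle := (hord c32 a42).mpr (cover_le (by decide))
      rw [h] at hle
      rcases ha42 with h' | h' <;> rw [h'] at hle <;>
        exact absurd (cycLE_mem_up _ _ hle) (by decide)
  have he32 : α e32 = e32 := by
    rcases lev2 _ (hlev e32) with h | h | h | h
    · rcases hA32in with h' | h' <;> exact absurd (hinj (h.trans h'.symm)) (by decide)
    · rcases hB32in with h' | h' <;> exact absurd (hinj (h.trans h'.symm)) (by decide)
    · exact absurd (hinj (h.trans hc32.symm)) (by decide)
    · exact h
  have he42 : α e42 = e42 := by
    have hle := (hord e32 e42).mpr (cover_le (by decide))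
    rw [he32] at hle
    rcases lev3 _ (hlev e42) with h | h | h | h <;> rw [h] at hle <;>
      first
        | exact h
        | exact absurd (cycLE_mem_up _ _ hle) (by decide)
  have hc42 : α c42 = c42 := by
    rcases lev3 _ (hlev c42) with h | h | h | h
    · rcases hA42in with h' | h' <;> exact absurd (hinj (h.trans h'.symm)) (by decide)
    · rcases hB42in with h' | h' <;> exact absurd (hinj (h.trans h'.symm)) (by decide)
    · exact h
    · exact absurd (hinj (h.trans he42.symm)) (by decide)
  have hc411 : α c411 = c411 := by
    have hle := (hord c411 c42).mpr (cover_le (by decide))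
    rw [hc42] at hle
    rcases lev1 _ (hlev c411) with h | h | h | h | h <;> rw [h] at hle <;>
      first
        | exact h
        | exact absurd (cycLE_mem_up _ _ hle) (by decide)
  have he411 : α e411 = e411 ∨ α e411 = f411 := by
    have hle := (hord e411 e42).mpr (cover_le (by decide))
    rw [he42] at hle
    rcases lev1 _ (hlev e411) with h | h | h | h | h
    · rw [h] at hle; exact absurd (cycLE_mem_up _ _ hle) (by decide)
    · rw [h] at hle; exact absurd (cycLE_mem_up _ _ hle) (by decide)
    · exact absurd (hinj (h.trans hc411.symm)) (by decide)
    · exact Or.inl h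
    · exact Or.inr h
  have hf411 : α f411 = e411 ∨ α f411 = f411 := by
    have hle := (hord f411 e42).mpr (cover_le (by decide))
    rw [he42] at hle
    rcases lev1 _ (hlev f411) with h | h | h | h | h
    · rw [h] at hle; exact absurd (cycLE_mem_up _ _ hle) (by decide)
    · rw [h] at hle; exact absurd (cycLE_mem_up _ _ hle) (by decide)
    · exact absurd (hinj (h.trans hc411.symm)) (by decide)
    · exact Or.inl h
    · exact Or.inr h
  rcases ha42 with hs | hs
  · have hb42' : α b42 = b42 := by
      rcases hb42 with h | h
      · exact absurd (hinj (h.trans hs.symm)) (by decide)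
      · exact h
    have hb32' : α b32 = b32 := by
      have hle := (hord b32 a42).mpr (cover_le (by decide))
      rw [hs] at hle
      rcases hb32 with h | h
      · rw [h] at hle; exact absurd (cycLE_mem_up _ _ hle) (by decide)
      · exact h
    have ha32' : α a32 = a32 := by
      rcases ha32 with h | h
      · exact h
      · exact absurd (hinj (h.trans hb32'.symm)) (by decide)
    have ha411' : α a411 = a411 := by
      have hle := (hord a411 a42).mpr (cover_le (by decide))
      rw [hs] at hle
      rcases lev1 _ (hlev a411) with h | h | h | h | h <;> rw [h] at hle <;>
        first
          | exact h
          | exact absurd (cycLE_mem_up _ _ hle) (by decide)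
    have hb411' : α b411 = b411 := by
      have hle := (hord b411 b42).mpr (cover_le (by decide))
      rw [hb42'] at hle
      rcases lev1 _ (hlev b411) with h | h | h | h | h <;> rw [h] at hle <;>
        first
          | exact h
          | exact absurd (cycLE_mem_up _ _ hle) (by decide)
    rcases he411 with ht | ht
    · have hf411' : α f411 = f411 := by
        rcases hf411 with h | h
        · exact absurd (hinj (h.trans ht.symm)) (by decide)
        · exact h
      refine ⟨(1, 1), Subtype.ext (Equiv.ext fun x => ?_)⟩
      show cfraw (1, 1) x = α x
      cases x <;> simp only [h6, h51, hs, hb42', hc42, he42, ha32', hb32', hc32, he32,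
        ha411', hb411', hc411, ht, hf411'] <;> decide
    · have hf411' : α f411 = e411 := by
        rcases hf411 with h | h
        · exact h
        · exact absurd (hinj (h.trans ht.symm)) (by decide)
      refine ⟨(1, Equiv.swap 0 1), Subtype.ext (Equiv.ext fun x => ?_)⟩
      show cfraw (1, Equiv.swap 0 1) x = α x
      cases x <;> simp only [h6, h51, hs, hb42', hc42, he42, ha32', hb32', hc32, he32,
        ha411', hb411', hc411, ht, hf411'] <;> decide
  · have hb42' : α b42 = a42 := by
      rcases hb42 with h | h
      · exact h
      · exact absurd (hinj (h.trans hs.symm)) (by decide)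
    have hb32' : α b32 = a32 := by
      have hle := (hord b32 a42).mpr (cover_le (by decide))
      rw [hs] at hle
      rcases hb32 with h | h
      · exact h
      · rw [h] at hle; exact absurd (cycLE_mem_up _ _ hle) (by decide)
    have ha32' : α a32 = b32 := by
      rcases ha32 with h | h
      · exact absurd (hinj (h.trans hb32'.symm)) (by decide)
      · exact h
    have ha411' : α a411 = b411 := by
      have hle := (hord a411 a42).mpr (cover_le (by decide))
      rw [hs] at hle
      rcases lev1 _ (hlev a411) with h | h | h | h | h <;> rw [h] at hle <;>
        first
          | exact h
          | exact absurd (cycLE_mem_up _ _ hle) (by decide)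
    have hb411' : α b411 = a411 := by
      have hle := (hord b411 b42).mpr (cover_le (by decide))
      rw [hb42'] at hle
      rcases lev1 _ (hlev b411) with h | h | h | h | h <;> rw [h] at hle <;>
        first
          | exact h
          | exact absurd (cycLE_mem_up _ _ hle) (by decide)
    rcases he411 with ht | ht
    · have hf411' : α f411 = f411 := by
        rcases hf411 with h | h
        · exact absurd (hinj (h.trans ht.symm)) (by decide)
        · exact h
      refine ⟨(Equiv.swap 0 1, 1), Subtype.ext (Equiv.ext fun x => ?_)⟩
      show cfraw (Equiv.swap 0 1, 1) x = α x
      cases x <;> simp only [h6, h51, hs, hb42', hc42, he42, ha32', hb32', hc32, he32,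
        ha411', hb411', hc411, ht, hf411'] <;> decide
    · have hf411' : α f411 = e411 := by
        rcases hf411 with h | h
        · exact h
        · exact absurd (hinj (h.trans ht.symm)) (by decide)
      refine ⟨(Equiv.swap 0 1, Equiv.swap 0 1), Subtype.ext (Equiv.ext fun x => ?_)⟩
      show cfraw (Equiv.swap 0 1, Equiv.swap 0 1) x = α x
      cases x <;> simp only [h6, h51, hs, hb42', hc42, he42, ha32', hb32', hc32, he32,
        ha411', hb411', hc411, ht, hf411'] <;> decide

/-- The subgroup of level-preserving order automorphisms of the
cyclopropane poset mapping every chiral pair onto a chiral pair is isomorphic to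
`S₂ × S₂`, generated by the automorphism simultaneously swapping
`a₄₂ ↔ b₄₂`, `a₃₂ ↔ b₃₂`, `a₄₁₁ ↔ b₄₁₁` and the automorphism swapping
`e₄₁₁ ↔ f₄₁₁` (each fixing all other elements). -/
theorem lunn_senior_stmt19 :
    ∃ Φ : Equiv.Perm (Fin 2) × Equiv.Perm (Fin 2) ≃* cycChiralAut,
      ∀ (π ρ : Equiv.Perm (Fin 2)),
        ((Φ (π, ρ) : Equiv.Perm CycQ) CycQ.a6 = CycQ.a6) ∧
        ((Φ (π, ρ) : Equiv.Perm CycQ) CycQ.a51 = CycQ.a51) ∧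
        ((Φ (π, ρ) : Equiv.Perm CycQ) CycQ.c42 = CycQ.c42) ∧
        ((Φ (π, ρ) : Equiv.Perm CycQ) CycQ.e42 = CycQ.e42) ∧
        ((Φ (π, ρ) : Equiv.Perm CycQ) CycQ.c32 = CycQ.c32) ∧
        ((Φ (π, ρ) : Equiv.Perm CycQ) CycQ.e32 = CycQ.e32) ∧
        ((Φ (π, ρ) : Equiv.Perm CycQ) CycQ.c411 = CycQ.c411) ∧
        (∀ i, (Φ (π, ρ) : Equiv.Perm CycQ) (cycAB42 i) = cycAB42 (π i)) ∧
        (∀ i, (Φ (π, ρ) : Equiv.Perm CycQ) (cycAB32 i) = cycAB32 (π i)) ∧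
        (∀ i, (Φ (π, ρ) : Equiv.Perm CycQ) (cycAB411 i) = cycAB411 (π i)) ∧
        (∀ j, (Φ (π, ρ) : Equiv.Perm CycQ) (cycEF j) = cycEF (ρ j)) := by
  refine ⟨MulEquiv.ofBijective cf ⟨cf_inj, cf_surj⟩, ?_⟩
  intro π ρ
  have hco : ∀ p, ((MulEquiv.ofBijective cf ⟨cf_inj, cf_surj⟩) p : Equiv.Perm CycQ) = cfraw p :=
    fun p => rfl
  simp only [hco]
  rcases cyc_key π with rfl | rfl <;> rcases cyc_key ρ with rfl | rfl <;>
    exact (by decide)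
end
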